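/- For every integer n ≥ 1 and every real 0 ≤ r ≤ 1, one has (1/(r+1))·n·(n+1)^r ≤ ∑_{i=1}^n i^r. -/

import Mathlib

/-- Lower bound of Lemma 1: `(1/(r+1)) n (n+1)^r ≤ ∑_{i=1}^n i^r` for `0 ≤ r ≤ 1`. -/
theorem sum_pow_lower_bound (n : ℕ) (hn : 1 ≤ n) (r : ℝ) (hr0 : 0 ≤ r) (hr1 : r ≤ 1) :
    (1 / (r + 1)) * n * ((n : ℝ) + 1) ^ r ≤ ∑ i ∈ Finset.Icc 1 n, (i : ℝ) ^ r := by
  have hr1' : (0:ℝ) < r + 1 := by linarith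
  induction n, hn using Nat.le_induction with
  | base =>
    simp only [Finset.Icc_self, Finset.sum_singleton, Nat.cast_one, Real.one_rpow]
    have h2 : ((1:ℝ) + 1) ^ r ≤ 1 + r * 1 :=
      rpow_one_add_le_one_add_mul_self (by norm_num) hr0 hr1
    rw [div_mul_eq_mul_div, div_mul_eq_mul_div, div_le_one hr1']
    nlinarith
  | succ m hm ih =>
    rw [Finset.sum_Icc_succ_top (by omega)]
    have hm0 : (0:ℝ) < (m:ℝ) + 1 := by positivity
    -- key : (m+2)^r ≤ (1 + r/(m+1)) * (m+1)^r
    have hkey : ((m:ℝ) + 1 + 1) ^ r ≤ (1 + r / ((m:ℝ)+1)) * ((m:ℝ)+1) ^ r := by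
      have h1 : ((m:ℝ) + 1 + 1) = (1 + 1/((m:ℝ)+1)) * ((m:ℝ)+1) := by
        field_simp
      rw [h1, Real.mul_rpow (by positivity) (by positivity)]
      have hb : (1 + 1/((m:ℝ)+1)) ^ r ≤ 1 + r * (1/((m:ℝ)+1)) :=
        rpow_one_add_le_one_add_mul_self (by linarith [one_div_nonneg.mpr hm0.le]) hr0 hr1
      have : (0:ℝ) ≤ ((m:ℝ)+1) ^ r := by positivity
      calc (1 + 1/((m:ℝ)+1)) ^ r * ((m:ℝ)+1) ^ r
          ≤ (1 + r * (1/((m:ℝ)+1))) * ((m:ℝ)+1) ^ r := by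
            exact mul_le_mul_of_nonneg_right hb this
        _ = (1 + r / ((m:ℝ)+1)) * ((m:ℝ)+1) ^ r := by ring_nf
    have hstep : (1 / (r + 1)) * (↑(m+1)) * ((↑(m+1):ℝ) + 1) ^ r ≤
        (1 / (r + 1)) * (m:ℝ) * ((m:ℝ) + 1) ^ r + ((↑(m+1):ℝ)) ^ r := by
      push_cast
      have hp : (0:ℝ) ≤ ((m:ℝ)+1) ^ r := by positivity
      have h2 : (1 / (r + 1)) * ((m:ℝ)+1) * ((m:ℝ) + 1 + 1) ^ r ≤
          (1 / (r + 1)) * ((m:ℝ)+1) * ((1 + r / ((m:ℝ)+1)) * ((m:ℝ)+1) ^ r) := by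
        apply mul_le_mul_of_nonneg_left hkey
        positivity
      refine h2.trans (le_of_eq ?_)
      field_simp
      ring
    exact hstep.trans (by push_cast; linarith [ih])
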